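/- Fix a d×d real symmetric positive definite matrix A. The function X ↦ tr( ( (A ⊗ A)^{1/2} (X ⊗ X) (A ⊗ A)^{1/2} )^{1/2} ) is concave on the convex set of d×d real symmetric positive definite matrices. -/

import Mathlib

open Matrix
open scoped Kronecker

/-- The (unique) positive semidefinite square root of a positive semidefinite real matrix,
extended by zero to arbitrary matrices. -/
noncomputable def msqrt {n : Type*} [Fintype n] [DecidableEq n]
    (M : Matrix n n ℝ) : Matrix n n ℝ :=
  @dite _ (M.PosSemidef) (Classical.dec _) (fun h => h.1.eigenvectorUnitary.1 * diagonal ((↑) ∘ (√·) ∘ h.1.eigenvalues) *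
    (star h.1.eigenvectorUnitary : Matrix n n ℝ)) (fun _ => 0)

namespace Matrix.PosSemidef

variable {n : Type*} [Fintype n] [DecidableEq n] {M : Matrix n n ℝ}

noncomputable def sqrt (h : M.PosSemidef) : Matrix n n ℝ :=
  h.1.eigenvectorUnitary.1 * diagonal ((↑) ∘ (√·) ∘ h.1.eigenvalues) *
    (star h.1.eigenvectorUnitary : Matrix n n ℝ)

open scoped MatrixOrder in
lemma sqrt_eq_cfcSqrt (h : M.PosSemidef) : h.sqrt = CFC.sqrt M := by
  rw [CFC.sqrt_eq_cfc, cfc_nnreal_eq_real _ M, h.1.cfc_eq]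
  simp [sqrt, IsHermitian.cfc, Function.comp_def, h.eigenvalues_nonneg]

open scoped MatrixOrder in
lemma sqrt_mul_self (h : M.PosSemidef) : h.sqrt * h.sqrt = M := by
  rw [sqrt_eq_cfcSqrt]
  exact CFC.sqrt_mul_sqrt_self M h.nonneg

open scoped MatrixOrder in
lemma posSemidef_sqrt (h : M.PosSemidef) : h.sqrt.PosSemidef := by
  rw [sqrt_eq_cfcSqrt]
  exact (CFC.sqrt_nonneg M).posSemidef

open scoped MatrixOrder in
lemma eq_sqrt_of_sq_eq {A B : Matrix n n ℝ} (hA : A.PosSemidef) (hB : B.PosSemidef)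
    (h : A ^ 2 = B) : A = hB.sqrt := by
  rw [sqrt_eq_cfcSqrt, eq_comm, CFC.sqrt_eq_iff B A hB.nonneg hA.nonneg, ← sq, h]

end Matrix.PosSemidef

lemma posSemidef_iff_eq_transpose_mul_self {n : Type*} [Fintype n] [DecidableEq n]
    {M : Matrix n n ℝ} : M.PosSemidef ↔ ∃ B : Matrix n n ℝ, M = Bᴴ * B := by
  constructor
  · intro h
    refine ⟨h.sqrt, ?_⟩
    rw [h.posSemidef_sqrt.1.eq, h.sqrt_mul_self]
  · rintro ⟨B, rfl⟩
    exact posSemidef_conjTranspose_mul_self B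

section Helpers

variable {n : Type*} [Fintype n] [DecidableEq n]
variable {m : Type*} [Fintype m] [DecidableEq m]

set_option linter.unusedSectionVars false

/-- Cauchy–Schwarz for the trace inner product. -/
private lemma trace_CS (M N : Matrix n n ℝ) :
    (trace (M * N)) ^ 2 ≤ trace (Mᴴ * M) * trace (Nᴴ * N) := by
  have h1 : trace (M * N) = ∑ p : n × n, M p.1 p.2 * N p.2 p.1 := by
    rw [Matrix.trace]
    simp only [Matrix.diag, Matrix.mul_apply]
    rw [← Finset.sum_product']
    rfl
  have h2 : trace (Mᴴ * M) = ∑ p : n × n, (M p.1 p.2) ^ 2 := by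
    rw [Matrix.trace]
    simp only [Matrix.diag, Matrix.mul_apply, conjTranspose_apply, star_trivial, ← sq]
    rw [Finset.sum_comm, ← Finset.sum_product']
    rfl
  have h3 : trace (Nᴴ * N) = ∑ p : n × n, (N p.2 p.1) ^ 2 := by
    rw [Matrix.trace]
    simp only [Matrix.diag, Matrix.mul_apply, conjTranspose_apply, star_trivial, ← sq]
    rw [← Finset.sum_product']
    rfl
  rw [h1, h2, h3]
  exact Finset.sum_mul_sq_le_sq_mul_sq _ _ _

/-- Variational bound: for `P` hermitian and `Q` psd invertible,
`(tr P)² ≤ tr(Q⁻¹ P²) tr Q`. -/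
private lemma trace_sq_le (P Q : Matrix n n ℝ) (hP : P.IsHermitian) (hQ : Q.PosSemidef)
    (hdet : IsUnit Q.det) :
    (trace P) ^ 2 ≤ trace (Q⁻¹ * (P * P)) * trace Q := by
  set S := hQ.sqrt with hSdef
  have hSS : S * S = Q := hQ.sqrt_mul_self
  have hSH : Sᴴ = S := hQ.posSemidef_sqrt.1
  have hSdet : IsUnit S.det := by
    have : S.det * S.det = Q.det := by rw [← det_mul, hSS]
    rcases hdet with ⟨u, hu⟩
    exact isUnit_of_mul_isUnit_left (this ▸ (hu ▸ u.isUnit))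
  have hM : (S⁻¹ * P)ᴴ = P * S⁻¹ := by
    rw [conjTranspose_mul, hP.eq, conjTranspose_nonsing_inv, hSH]
  have h1 : trace (S⁻¹ * P * S) = trace P := by
    rw [trace_mul_cycle, mul_nonsing_inv _ hSdet, Matrix.one_mul]
  have h2 : trace ((S⁻¹ * P)ᴴ * (S⁻¹ * P)) = trace (Q⁻¹ * (P * P)) := by
    rw [hM, mul_assoc, ← mul_assoc S⁻¹ S⁻¹ P, ← Matrix.mul_inv_rev, hSS, trace_mul_comm,
      mul_assoc]
  have h3 : trace (Sᴴ * S) = trace Q := by rw [hSH, hSS]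
  calc (trace P) ^ 2 = (trace ((S⁻¹ * P) * S)) ^ 2 := by rw [mul_assoc] at h1 ⊢; rw [h1]
    _ ≤ trace ((S⁻¹ * P)ᴴ * (S⁻¹ * P)) * trace (Sᴴ * S) := trace_CS _ _
    _ = trace (Q⁻¹ * (P * P)) * trace Q := by rw [h2, h3]

private lemma kron_conjTranspose (M : Matrix n n ℝ) (N : Matrix m m ℝ) :
    (M ⊗ₖ N)ᴴ = Mᴴ ⊗ₖ Nᴴ := by
  ext i j
  simp [conjTranspose_apply]

private lemma kron_posSemidef {M : Matrix n n ℝ} {N : Matrix m m ℝ}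
    (hM : M.PosSemidef) (hN : N.PosSemidef) : (M ⊗ₖ N).PosSemidef := by
  obtain ⟨a, rfl⟩ := posSemidef_iff_eq_transpose_mul_self.mp hM
  obtain ⟨b, rfl⟩ := posSemidef_iff_eq_transpose_mul_self.mp hN
  rw [mul_kronecker_mul, ← kron_conjTranspose]
  exact posSemidef_conjTranspose_mul_self _

private lemma msqrt_eq {M : Matrix n n ℝ} (hM : M.PosSemidef) : msqrt M = hM.sqrt := by
  rw [msqrt, dif_pos hM]
  rfl

private lemma msqrt_kron {M : Matrix n n ℝ} {N : Matrix m m ℝ}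
    (hM : M.PosSemidef) (hN : N.PosSemidef) :
    msqrt (M ⊗ₖ N) = hM.sqrt ⊗ₖ hN.sqrt := by
  rw [msqrt_eq (kron_posSemidef hM hN)]
  refine ((kron_posSemidef hM.posSemidef_sqrt hN.posSemidef_sqrt).eq_sqrt_of_sq_eq
    (kron_posSemidef hM hN) ?_).symm
  rw [pow_two, ← mul_kronecker_mul, hM.sqrt_mul_self, hN.sqrt_mul_self]

private lemma posDef_conj {X N : Matrix n n ℝ} (hX : X.PosDef) (hN : IsUnit N.det) :
    (Nᴴ * X * N).PosDef := by
  refine PosDef.of_dotProduct_mulVec_pos (isHermitian_conjTranspose_mul_mul N hX.1) fun x hx => ?_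
  have hNx : N *ᵥ x ≠ 0 :=
    (Matrix.mulVec_injective_iff_isUnit.mpr (isUnit_iff_isUnit_det _ |>.2 hN)).ne_iff'
      (mulVec_zero N) |>.2 hx
  have : star x ⬝ᵥ (Nᴴ * X * N) *ᵥ x = star (N *ᵥ x) ⬝ᵥ X *ᵥ (N *ᵥ x) := by
    rw [star_mulVec, ← dotProduct_mulVec, mul_assoc, ← mulVec_mulVec, ← mulVec_mulVec]
  rw [this]
  exact hX.dotProduct_mulVec_pos hNx

private lemma posDef_smul {c : ℝ} {M : Matrix n n ℝ} (hc : 0 < c) (hM : M.PosDef) :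
    (c • M).PosDef := by
  refine PosDef.of_dotProduct_mulVec_pos ?_ fun x hx => ?_
  · show (c • M)ᴴ = c • M
    rw [conjTranspose_smul, star_trivial, hM.1.eq]
  · rw [smul_mulVec, dotProduct_smul, smul_eq_mul]
    exact mul_pos hc (hM.dotProduct_mulVec_pos hx)

private lemma posSemidef_smul {c : ℝ} {M : Matrix n n ℝ} (hc : 0 ≤ c) (hM : M.PosSemidef) :
    (c • M).PosSemidef := by
  refine PosSemidef.of_dotProduct_mulVec_nonneg ?_ fun x => ?_
  · show (c • M)ᴴ = c • M
    rw [conjTranspose_smul, star_trivial, hM.1.eq]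
  · rw [smul_mulVec, dotProduct_smul, smul_eq_mul]
    exact mul_nonneg hc (hM.dotProduct_mulVec_nonneg x)

private lemma convex_posDef : Convex ℝ {X : Matrix n n ℝ | X.PosDef} := by
  intro X hX Y hY a b ha hb hab
  rcases eq_or_lt_of_le ha with h | h
  · have hb1 : b = 1 := by linarith
    simpa [← h, hb1] using hY
  · exact (posDef_smul h hX).add_posSemidef (posSemidef_smul hb hY.posSemidef)

/-- The objective rewrites as the square of a trace of a square root. -/
private lemma objective_eq {A : Matrix n n ℝ} (hA : A.PosSemidef) (X : Matrix n n ℝ)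
    (hC : (hA.sqrt * X * hA.sqrt).PosSemidef) :
    (msqrt (msqrt (A ⊗ₖ A) * (X ⊗ₖ X) * msqrt (A ⊗ₖ A))).trace
      = (trace hC.sqrt) ^ 2 := by
  rw [msqrt_kron hA hA]
  have h : (hA.sqrt ⊗ₖ hA.sqrt) * (X ⊗ₖ X) * (hA.sqrt ⊗ₖ hA.sqrt)
      = (hA.sqrt * X * hA.sqrt) ⊗ₖ (hA.sqrt * X * hA.sqrt) := by
    rw [mul_kronecker_mul, mul_kronecker_mul]
  rw [h, msqrt_kron hC hC, trace_kronecker, sq]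

end Helpers

set_option maxHeartbeats 1000000

/-- **Concavity of the Bures–Wasserstein trace term with Kronecker structure.**
Fix a `d × d` real symmetric positive definite matrix `A`.  The map
`X ↦ tr( ((A ⊗ A)^{1/2} (X ⊗ X) (A ⊗ A)^{1/2})^{1/2} )` is concave on the convex set of
`d × d` real symmetric positive definite matrices.
(For real matrices, positive definiteness `Matrix.PosDef` includes symmetry.) -/
theorem trace_sqrt_kronecker_concave {d : ℕ}
    (A : Matrix (Fin d) (Fin d) ℝ) (hA : A.PosDef) :
    ConcaveOn ℝ {X : Matrix (Fin d) (Fin d) ℝ | X.PosDef}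
      (fun X => (msqrt (msqrt (A ⊗ₖ A) * (X ⊗ₖ X) * msqrt (A ⊗ₖ A))).trace) := by
  refine ⟨convex_posDef, ?_⟩
  intro X hX Y hY a b ha hb hab
  set SA := hA.posSemidef.sqrt with hSAdef
  have hSAH : SAᴴ = SA := hA.posSemidef.posSemidef_sqrt.1
  have hSAdet : IsUnit SA.det := by
    have hdet : SA.det * SA.det = A.det := by rw [← det_mul, hA.posSemidef.sqrt_mul_self]
    refine isUnit_iff_ne_zero.mpr fun h0 => ?_
    rw [h0, mul_zero] at hdet
    exact hA.det_pos.ne' hdet.symm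
  -- the congruencies
  have hconj : ∀ {W : Matrix (Fin d) (Fin d) ℝ}, W.PosDef → (SA * W * SA).PosDef := by
    intro W hW
    have := posDef_conj hW hSAdet
    rwa [hSAH] at this
  have hZ : (a • X + b • Y).PosDef := convex_posDef hX hY ha hb hab
  have hCX : (SA * X * SA).PosDef := hconj hX
  have hCY : (SA * Y * SA).PosDef := hconj hY
  have hCZ : (SA * (a • X + b • Y) * SA).PosDef := hconj hZ
  set Q := hCZ.posSemidef.sqrt with hQdef
  have hQQ : Q * Q = SA * (a • X + b • Y) * SA := hCZ.posSemidef.sqrt_mul_self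
  have hQdet : IsUnit Q.det := by
    have hdet : Q.det * Q.det = (SA * (a • X + b • Y) * SA).det := by rw [← det_mul, hQQ]
    refine isUnit_iff_ne_zero.mpr fun h0 => ?_
    rw [h0, mul_zero] at hdet
    exact hCZ.det_pos.ne' hdet.symm
  -- values of the objective
  have hfX := objective_eq hA.posSemidef X hCX.posSemidef
  have hfY := objective_eq hA.posSemidef Y hCY.posSemidef
  have hfZ := objective_eq hA.posSemidef (a • X + b • Y) hCZ.posSemidef
  simp only [smul_eq_mul]
  rw [hfX, hfY, hfZ]
  -- key: f(Z) in variational equality form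
  have hQinv : Q⁻¹ * (SA * (a • X + b • Y) * SA) = Q := by
    rw [← hQQ, ← mul_assoc, nonsing_inv_mul _ hQdet, Matrix.one_mul]
  -- linearity
  have hlin : SA * (a • X + b • Y) * SA
      = a • (SA * X * SA) + b • (SA * Y * SA) := by
    rw [Matrix.mul_add, Matrix.add_mul, mul_smul_comm, mul_smul_comm,
      smul_mul_assoc, smul_mul_assoc]
  have htr : trace (Q⁻¹ * (SA * (a • X + b • Y) * SA))
      = a * trace (Q⁻¹ * (SA * X * SA)) + b * trace (Q⁻¹ * (SA * Y * SA)) := by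
    rw [hlin, Matrix.mul_add, trace_add, mul_smul_comm, mul_smul_comm,
      trace_smul, trace_smul, smul_eq_mul, smul_eq_mul]
  -- key inequalities from Cauchy–Schwarz
  have keyX : (trace hCX.posSemidef.sqrt) ^ 2
      ≤ trace (Q⁻¹ * (SA * X * SA)) * trace Q := by
    have := trace_sq_le hCX.posSemidef.sqrt Q hCX.posSemidef.posSemidef_sqrt.1
      hCZ.posSemidef.posSemidef_sqrt hQdet
    rwa [hCX.posSemidef.sqrt_mul_self] at this
  have keyY : (trace hCY.posSemidef.sqrt) ^ 2
      ≤ trace (Q⁻¹ * (SA * Y * SA)) * trace Q := by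
    have := trace_sq_le hCY.posSemidef.sqrt Q hCY.posSemidef.posSemidef_sqrt.1
      hCZ.posSemidef.posSemidef_sqrt hQdet
    rwa [hCY.posSemidef.sqrt_mul_self] at this
  calc a * (trace hCX.posSemidef.sqrt) ^ 2 + b * (trace hCY.posSemidef.sqrt) ^ 2
      ≤ a * (trace (Q⁻¹ * (SA * X * SA)) * trace Q)
        + b * (trace (Q⁻¹ * (SA * Y * SA)) * trace Q) := by
        gcongr
    _ = (a * trace (Q⁻¹ * (SA * X * SA)) + b * trace (Q⁻¹ * (SA * Y * SA))) * trace Q := by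
        ring
    _ = trace (Q⁻¹ * (SA * (a • X + b • Y) * SA)) * trace Q := by rw [htr]
    _ = (trace Q) ^ 2 := by rw [hQinv, sq]
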